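/- There is a constant d (depending only on the universal machine) such that for all binary strings x and y: C(xy | n_x, n_y) ≤ C(y | n_y) + C(x | y, n_x) + 2·C⁽²⁾(y | n_y) + d, where xy denotes the concatenation of x and y. (Easy direction of the chain rule.) -/

import Mathlib

namespace SymInfo

/-- A conditional machine: the input encodes the pair (program, conditional information). -/
abbrev Machine : Type := ℕ →. ℕ

/-- Machine `M` produces string `x` from some program, given condition `cond`. -/
def Produces (M : Machine) (x cond : List Bool) : Prop :=
  ∃ p : List Bool, Encodable.encode x ∈ M (Nat.pair (Encodable.encode p) (Encodable.encode cond))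

/-- Conditional plain Kolmogorov complexity of `x` given `cond` w.r.t. `M`:
the length of a shortest program producing `x` from `cond`. -/
noncomputable def C (M : Machine) (x cond : List Bool) : ℕ :=
  sInf {n | ∃ p : List Bool, p.length = n ∧
    Encodable.encode x ∈ M (Nat.pair (Encodable.encode p) (Encodable.encode cond))}

/-- Binary representation of a natural number. -/
def bin (n : ℕ) : List Bool := n.bits

/-- Standard pairing of two strings, used for conditioning on several objects. -/
def pair2 (a b : List Bool) : List Bool :=
  bin (Nat.pair (Encodable.encode a) (Encodable.encode b))

/-- `U` is a universal machine for plain conditional complexity: it is partial computable,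
produces every string under every condition, and simulates every partial computable
machine up to an additive constant. -/
def IsUniversal (U : Machine) : Prop :=
  Nat.Partrec U ∧ (∀ x cond : List Bool, Produces U x cond) ∧
    ∀ M : Machine, Nat.Partrec M → ∃ c : ℕ, ∀ x cond : List Bool,
      Produces M x cond → C U x cond ≤ C M x cond + c

/-- `C(x | n_x)`: complexity of `x` given (the binary representation of) its length. -/
noncomputable def CL (U : Machine) (x : List Bool) : ℕ := C U x (bin x.length)

/-- `C⁽²⁾(x | n_x) = C(C(x | n_x) | n_x)`. -/
noncomputable def C2 (U : Machine) (x : List Bool) : ℕ := C U (bin (CL U x)) (bin x.length)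

/-- `I(x : y) = C(y | n_y) − C(y | x, n_y)`: the information in `x` about `y`. -/
noncomputable def I (U : Machine) (x y : List Bool) : ℤ :=
  (C U y (bin y.length) : ℤ) - (C U y (pair2 x (bin y.length)) : ℤ)

/-- Base-2 logarithm with the convention `log 0 = 0` (and `log 1 = 0`). -/
def log2 (n : ℕ) : ℕ := Nat.log 2 n


/-! ### Auxiliary development -/

open Encodable

/-! Bits and their inverse -/

/-- Inverse of `Nat.bits`. -/
def ofB (l : List Bool) : ℕ := l.foldr Nat.bit 0

lemma ofB_bits (n : ℕ) : ofB (Nat.bits n) = n := by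
  induction n using Nat.binaryRec' with
  | zero => simp [ofB, Nat.zero_bits]
  | bit b n h ih => rw [ofB, Nat.bits_append_bit n b h]; simp only [List.foldr_cons]; rw [← ofB, ih]

lemma bits_def' {n : ℕ} (h : n ≠ 0) : n.bits = n.bodd :: n.div2.bits := by
  conv_lhs => rw [← Nat.bit_bodd_div2 n]
  refine Nat.bits_append_bit _ _ fun h2 => ?_
  by_contra hb
  simp only [Bool.not_eq_true] at hb
  apply h
  conv_lhs => rw [← Nat.bit_bodd_div2 n]
  rw [h2, hb]; rfl

lemma primrec_bits : Primrec Nat.bits := by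
  have h : Primrec₂ (fun (_ : Unit) (n : ℕ) => n.bits) := by
    apply Primrec.nat_strong_rec _
      (g := fun (_ : Unit) (l : List (List Bool)) =>
        if l.length = 0 then some [] else l[l.length.div2]?.map (l.length.bodd :: ·))
    · apply Primrec.ite
      · exact PrimrecRel.comp Primrec.eq (Primrec.list_length.comp Primrec.snd) (Primrec.const 0)
      · exact Primrec.const (some [])
      · apply Primrec.option_map
        · exact Primrec.list_getElem?.comp Primrec.snd
            (Primrec.nat_div2.comp (Primrec.list_length.comp Primrec.snd))
        · exact Primrec.list_cons.comp
            ((Primrec.nat_bodd.comp (Primrec.list_length.comp (Primrec.snd.comp Primrec.fst))))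
            Primrec.snd
    · intro _ n
      simp only [List.length_map, List.length_range]
      rcases Nat.eq_zero_or_pos n with rfl | hn
      · simp [Nat.zero_bits]
      · have hlt : n.div2 < n := Nat.binaryRec_decreasing (Nat.pos_iff_ne_zero.mp hn)
        rw [if_neg (Nat.pos_iff_ne_zero.mp hn)]
        simp only [List.getElem?_map, List.getElem?_range hlt, Option.map_some]
        rw [← bits_def' (Nat.pos_iff_ne_zero.mp hn)]
  exact h.comp (Primrec.const ()) Primrec.id

lemma primrec_bit : Primrec₂ Nat.bit := by
  have h : Primrec₂ (fun (b : Bool) (n : ℕ) => cond b (2 * n + 1) (2 * n)) := by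
    apply Primrec.cond Primrec.fst
    · exact Primrec.succ.comp ((Primrec.nat_mul).comp (Primrec.const 2) Primrec.snd)
    · exact (Primrec.nat_mul).comp (Primrec.const 2) Primrec.snd
  apply h.of_eq
  intro b n
  cases b <;> simp [Nat.bit]

lemma primrec_ofB : Primrec ofB := by
  have h := Primrec.list_foldr (f := @id (List Bool)) (g := fun _ => (0 : ℕ))
    (h := fun _ p => Nat.bit p.1 p.2) Primrec.id (Primrec.const 0)
    ((primrec_bit.comp (Primrec.fst.comp Primrec.snd) (Primrec.snd.comp Primrec.snd)).to₂)
  exact h.of_eq fun l => rfl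

/-! A parser for a self-delimiting prefix: each data bit is doubled, and the first
non-equal pair of bits marks the end of the prefix. -/

abbrev PSt : Type := (List Bool × List Bool) ⊕ Option (List Bool × List Bool)

def pstep (s : PSt) : PSt :=
  Sum.elim (fun ar =>
    if ar.2.length < 2 then Sum.inr none
    else if ar.2.headI = ar.2.tail.headI then Sum.inl (ar.1 ++ [ar.2.headI], ar.2.tail.tail)
    else Sum.inr (some (ar.1, ar.2.tail.tail))) Sum.inr s

def parseAux : ℕ → PSt → PSt
  | 0, s => s
  | n+1, s => pstep (parseAux n s)

def parse (l : List Bool) : Option (List Bool × List Bool) :=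
  Sum.elim (fun _ => none) id (parseAux (l.length + 1) (Sum.inl ([], l)))

/-- The self-delimiting encoding: double each bit, then append the terminator `[false, true]`. -/
def sd (q : List Bool) : List Bool := q.flatMap (fun b => [b, b]) ++ [false, true]

lemma sd_length (q : List Bool) : (sd q).length = 2 * q.length + 2 := by
  induction q with
  | nil => rfl
  | cons b q ih => simp_all [sd]; omega

lemma parseAux_inr (n : ℕ) (r : Option (List Bool × List Bool)) :
    parseAux n (Sum.inr r) = Sum.inr r := by
  induction n with
  | zero => rfl
  | succ n ih => simp [parseAux, ih, pstep]

lemma parseAux_succ' (n : ℕ) (s : PSt) : parseAux (n+1) s = parseAux n (pstep s) := by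
  induction n generalizing s with
  | zero => rfl
  | succ n ih => rw [parseAux, ih, parseAux]

lemma parseAux_sd (q : List Bool) : ∀ (acc r : List Bool) (n : ℕ), q.length + 1 ≤ n →
    parseAux n (Sum.inl (acc, sd q ++ r)) = Sum.inr (some (acc ++ q, r)) := by
  induction q with
  | nil =>
    intro acc r n hn
    obtain ⟨m, rfl⟩ := Nat.exists_eq_add_of_le hn
    have he : ([] : List Bool).length + 1 + m = (([] : List Bool).length + m) + 1 := by omega
    rw [he, parseAux_succ']
    have : pstep (Sum.inl (acc, sd [] ++ r)) = Sum.inr (some (acc, r)) := by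
      simp [pstep, sd]
    rw [this, parseAux_inr]
    simp
  | cons b q ih =>
    intro acc r n hn
    have h2 : q.length + 1 + 1 ≤ n := by simp at hn; omega
    obtain ⟨m, rfl⟩ := Nat.exists_eq_add_of_le h2
    have he : q.length + 1 + 1 + m = (q.length + 1 + m) + 1 := by omega
    rw [he, parseAux_succ']
    have hstep : pstep (Sum.inl (acc, sd (b :: q) ++ r)) = Sum.inl (acc ++ [b], sd q ++ r) := by
      have : sd (b :: q) ++ r = b :: b :: (sd q ++ r) := by simp [sd]
      rw [this]
      simp [pstep]
    rw [hstep, ih (acc ++ [b]) r (q.length + 1 + m) (by omega)]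
    simp

lemma parse_sd (q r : List Bool) : parse (sd q ++ r) = some (q, r) := by
  unfold parse
  rw [parseAux_sd q [] r _ (by simp [sd_length]; omega)]
  simp

lemma primrec_pstep : Primrec pstep := by
  apply Primrec.sumCasesOn Primrec.id
  · apply Primrec.ite
    · exact PrimrecRel.comp Primrec.nat_lt
        (Primrec.list_length.comp (Primrec.snd.comp Primrec.snd)) (Primrec.const 2)
    · exact Primrec.const (Sum.inr none)
    · apply Primrec.ite
      · exact PrimrecRel.comp Primrec.eq
          (Primrec.list_headI.comp (Primrec.snd.comp Primrec.snd))
          (Primrec.list_headI.comp (Primrec.list_tail.comp (Primrec.snd.comp Primrec.snd)))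
      · exact Primrec.sumInl.comp (Primrec.pair
          (Primrec.list_append.comp (Primrec.fst.comp Primrec.snd)
            (Primrec.list_cons.comp (Primrec.list_headI.comp (Primrec.snd.comp Primrec.snd))
              (Primrec.const [])))
          (Primrec.list_tail.comp (Primrec.list_tail.comp (Primrec.snd.comp Primrec.snd))))
      · exact Primrec.sumInr.comp (Primrec.option_some.comp (Primrec.pair
          (Primrec.fst.comp Primrec.snd)
          (Primrec.list_tail.comp (Primrec.list_tail.comp (Primrec.snd.comp Primrec.snd)))))
  · exact (Primrec.sumInr.comp Primrec.snd).to₂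

lemma primrec_parse : Primrec parse := by
  have h1 : Primrec fun l : List Bool =>
      parseAux (l.length + 1) (Sum.inl (([], l) : List Bool × List Bool)) := by
    have h := Primrec.nat_rec' (f := fun l : List Bool => l.length + 1)
      (g := fun l : List Bool => (Sum.inl (([], l)) : PSt))
      (h := fun _ p => pstep p.2)
      (Primrec.succ.comp Primrec.list_length)
      (Primrec.sumInl.comp (Primrec.pair (Primrec.const []) Primrec.id))
      ((primrec_pstep.comp (Primrec.snd.comp Primrec.snd)).to₂)
    have key : ∀ (n : ℕ) (s : PSt), (Nat.rec s (fun _ ih => pstep ih) n : PSt) = parseAux n s := by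
      intro n s
      induction n with
      | zero => rfl
      | succ n ih => simp only [parseAux, ih]
    apply h.of_eq
    intro l
    beta_reduce
    exact key (l.length + 1) (Sum.inl ([], l))
  exact Primrec.sumCasesOn h1 (Primrec.const none).to₂ Primrec.snd.to₂

/-! Take and drop, via primitive-recursive-friendly definitions. -/

def mytake (n : ℕ) (l : List Bool) : List Bool := (List.range n).map l.getI

def mydrop (n : ℕ) (l : List Bool) : List Bool := (mytake (l.length - n) l.reverse).reverse

lemma mytake_eq (n : ℕ) (l : List Bool) (h : n ≤ l.length) : mytake n l = l.take n := by
  apply List.ext_getElem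
  · simp [mytake, h]
  · intro i h1 h2
    have hi : i < l.length := by simp [mytake] at h1; omega
    simp [mytake, List.getI_eq_getElem _ hi]

lemma mytake_left (p1 p2 : List Bool) : mytake p1.length (p1 ++ p2) = p1 := by
  rw [mytake_eq _ _ (by simp), List.take_left]

lemma mydrop_left (p1 p2 : List Bool) : mydrop p1.length (p1 ++ p2) = p2 := by
  unfold mydrop
  have h1 : (p1 ++ p2).length - p1.length = p2.reverse.length := by simp
  rw [h1, List.reverse_append, mytake_left, List.reverse_reverse]

lemma computable_mytake : Computable₂ mytake := by
  apply Computable₂.mk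
  exact (Primrec.list_map (Primrec.list_range.comp Primrec.fst)
    ((Primrec.list_getI.comp (Primrec.snd.comp Primrec.fst) Primrec.snd).to₂)).to_comp

lemma computable_mydrop : Computable₂ mydrop := by
  apply Computable₂.mk
  exact Computable.list_reverse.comp (computable_mytake.comp
    ((Primrec.nat_sub.comp (Primrec.list_length.comp Primrec.snd) Primrec.fst).to_comp)
    (Primrec.list_reverse.comp Primrec.snd).to_comp)

/-! ### The machine witnessing the chain rule -/

abbrev S0 : Type := (List Bool × List Bool) × List Bool × List Bool
abbrev S1 : Type := List Bool × List Bool × List Bool × ℕ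
abbrev S2 : Type := List Bool × List Bool × List Bool

/-- Decode the input: program splits as a self-delimiting prefix `q` and the rest `r`;
the condition decodes into the pair `(a, b)` (intended: `a = bin n_x`, `b = bin n_y`). -/
def preM (n : ℕ) : Option S0 :=
  (decode (α := List Bool) n.unpair.2).bind fun c =>
    (decode (α := List Bool) (ofB c).unpair.1).bind fun a =>
      (decode (α := List Bool) (ofB c).unpair.2).bind fun b =>
        (decode (α := List Bool) n.unpair.1).bind fun p =>
          (parse p).map fun qr => (qr, a, b)

/-- Run `U` on `(q, b)` to recover the length `ℓ`. -/
def st1 (U : Machine) (s : S0) : Part S1 :=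
  (U (Nat.pair (encode s.1.1) (encode s.2.2))).bind fun el =>
    ((decode (α := List Bool) el).map fun lb => (s.1.2, s.2.1, s.2.2, ofB lb) : Option S1)

/-- Run `U` on the next `ℓ` bits and `b` to recover `y`. -/
def st2 (U : Machine) (t : S1) : Part S2 :=
  (U (Nat.pair (encode (mytake t.2.2.2 t.1)) (encode t.2.2.1))).bind fun ey =>
    ((decode (α := List Bool) ey).map fun y => (mydrop t.2.2.2 t.1, t.2.1, y) : Option S2)

/-- Run `U` on the remaining bits and `(y, a)` to recover `x`; output `x ++ y`. -/
def st3 (U : Machine) (u : S2) : Part ℕ :=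
  (U (Nat.pair (encode u.1) (encode (pair2 u.2.2 u.2.1)))).bind fun ex =>
    ((decode (α := List Bool) ex).map fun x => (encode (x ++ u.2.2) : ℕ) : Option ℕ)

/-- The machine for the chain rule. -/
def MM (U : Machine) : Machine := fun n =>
  ((((preM n : Option S0) : Part S0).bind (st1 U)).bind (st2 U)).bind (st3 U)

set_option maxHeartbeats 1000000 in
lemma computable_preM : Computable preM := by
  apply Computable.option_bind
    (Computable.decode.comp ((Primrec.snd.comp Primrec.unpair).to_comp))
  apply Computable₂.mk
  apply Computable.option_bind
    (Computable.decode.comp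
      ((Primrec.fst.comp (Primrec.unpair.comp (primrec_ofB.comp Primrec.snd))).to_comp))
  apply Computable₂.mk
  apply Computable.option_bind
    (Computable.decode.comp ((Primrec.snd.comp (Primrec.unpair.comp
      (primrec_ofB.comp (Primrec.snd.comp Primrec.fst)))).to_comp))
  apply Computable₂.mk
  apply Computable.option_bind
    (Computable.decode.comp ((Primrec.fst.comp
      (Primrec.unpair.comp (Primrec.fst.comp (Primrec.fst.comp Primrec.fst)))).to_comp))
  apply Computable₂.mk
  apply Computable.option_map (primrec_parse.to_comp.comp Computable.snd)
  have hqr : Computable (fun x : ((((ℕ × List Bool) × List Bool) × List Bool) × List Bool) ×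
      (List Bool × List Bool) => x.2) := Computable.snd
  have ha : Computable (fun x : ((((ℕ × List Bool) × List Bool) × List Bool) × List Bool) ×
      (List Bool × List Bool) => x.1.1.1.2) :=
    (Primrec.snd.comp (Primrec.fst.comp (Primrec.fst.comp Primrec.fst))).to_comp
  have hb : Computable (fun x : ((((ℕ × List Bool) × List Bool) × List Bool) × List Bool) ×
      (List Bool × List Bool) => x.1.1.2) :=
    (Primrec.snd.comp (Primrec.fst.comp Primrec.fst)).to_comp
  exact (hqr.pair (ha.pair hb)).to₂

lemma computable_natPair : Computable₂ Nat.pair := Primrec₂.natPair.to_comp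

lemma computable_pair2 : Computable₂ pair2 := by
  apply Computable₂.mk
  exact (primrec_bits.to_comp).comp
    (computable_natPair.comp (Computable.encode.comp Computable.fst)
      (Computable.encode.comp Computable.snd))

variable {U : Machine}

lemma partrec_st1 (hU : Nat.Partrec U) : Partrec (st1 U) := by
  apply Partrec.bind
  · exact (Partrec.nat_iff.2 hU).comp
      (computable_natPair.comp (Computable.encode.comp (Computable.fst.comp Computable.fst))
        (Computable.encode.comp (Computable.snd.comp Computable.snd)))
  · show Partrec fun p : S0 × ℕ =>
      (((decode (α := List Bool) p.2).map
        fun lb => (p.1.1.2, p.1.2.1, p.1.2.2, ofB lb) : Option S1) : Part S1)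
    apply Computable.ofOption
    apply Computable.option_map (Computable.decode.comp Computable.snd)
    apply Computable₂.mk
    exact Computable.pair
      ((Primrec.snd.comp (Primrec.fst.comp (Primrec.fst.comp Primrec.fst))).to_comp)
      (Computable.pair
        ((Primrec.fst.comp (Primrec.snd.comp (Primrec.fst.comp Primrec.fst))).to_comp)
        (Computable.pair
          ((Primrec.snd.comp (Primrec.snd.comp (Primrec.fst.comp Primrec.fst))).to_comp)
          (primrec_ofB.to_comp.comp Computable.snd)))

lemma partrec_st2 (hU : Nat.Partrec U) : Partrec (st2 U) := by
  apply Partrec.bind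
  · exact (Partrec.nat_iff.2 hU).comp
      (computable_natPair.comp
        (Computable.encode.comp (computable_mytake.comp
          ((Primrec.snd.comp (Primrec.snd.comp Primrec.snd)).to_comp) Computable.fst))
        (Computable.encode.comp ((Primrec.fst.comp (Primrec.snd.comp Primrec.snd)).to_comp)))
  · show Partrec fun p : S1 × ℕ =>
      (((decode (α := List Bool) p.2).map
        fun y => (mydrop p.1.2.2.2 p.1.1, p.1.2.1, y) : Option S2) : Part S2)
    apply Computable.ofOption
    apply Computable.option_map (Computable.decode.comp Computable.snd)
    apply Computable₂.mk
    exact Computable.pair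
      (computable_mydrop.comp
        ((Primrec.snd.comp (Primrec.snd.comp
          (Primrec.snd.comp (Primrec.fst.comp Primrec.fst)))).to_comp)
        ((Primrec.fst.comp (Primrec.fst.comp Primrec.fst)).to_comp))
      (Computable.pair
        ((Primrec.fst.comp (Primrec.snd.comp (Primrec.fst.comp Primrec.fst))).to_comp)
        Computable.snd)

lemma partrec_st3 (hU : Nat.Partrec U) : Partrec (st3 U) := by
  apply Partrec.bind
  · exact (Partrec.nat_iff.2 hU).comp
      (computable_natPair.comp (Computable.encode.comp Computable.fst)
        (Computable.encode.comp (computable_pair2.comp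
          ((Primrec.snd.comp Primrec.snd).to_comp) ((Primrec.fst.comp Primrec.snd).to_comp))))
  · show Partrec fun p : S2 × ℕ =>
      (((decode (α := List Bool) p.2).map
        fun x => (encode (x ++ p.1.2.2) : ℕ) : Option ℕ) : Part ℕ)
    apply Computable.ofOption
    apply Computable.option_map (Computable.decode.comp Computable.snd)
    apply Computable₂.mk
    exact Computable.encode.comp (Computable.list_append.comp Computable.snd
      ((Primrec.snd.comp (Primrec.snd.comp (Primrec.fst.comp Primrec.fst))).to_comp))

lemma partrec_MM (hU : Nat.Partrec U) : Nat.Partrec (MM U) := by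
  apply Partrec.nat_iff.1
  apply Partrec.bind
  · apply Partrec.bind
    · apply Partrec.bind
      · exact Computable.ofOption computable_preM
      · exact ((partrec_st1 hU).comp Computable.snd).to₂
    · exact ((partrec_st2 hU).comp Computable.snd).to₂
  · exact ((partrec_st3 hU).comp Computable.snd).to₂

/-! ### Basic facts about `C` -/

lemma C_le {M : Machine} {x cond p : List Bool}
    (h : encode x ∈ M (Nat.pair (encode p) (encode cond))) : C M x cond ≤ p.length :=
  Nat.sInf_le ⟨p, rfl, h⟩

lemma exists_shortest (hU : IsUniversal U) (x cond : List Bool) :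
    ∃ p : List Bool, p.length = C U x cond ∧
      encode x ∈ U (Nat.pair (encode p) (encode cond)) := by
  obtain ⟨p, hp⟩ := hU.2.1 x cond
  have hne : {n | ∃ p : List Bool, p.length = n ∧
      encode x ∈ U (Nat.pair (encode p) (encode cond))}.Nonempty := ⟨p.length, p, rfl, hp⟩
  exact Nat.sInf_mem hne

lemma ofB_pair2 (a b : List Bool) : ofB (pair2 a b) = Nat.pair (encode a) (encode b) :=
  ofB_bits _


/-- Easy direction of the chain rule:
`C(xy | n_x, n_y) ≤ C(y | n_y) + C(x | y, n_x) + 2·C⁽²⁾(y | n_y) + O(1)`. -/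
theorem chain_rule_upper_bound (U : Machine) (hU : IsUniversal U) :
    ∃ d : ℕ, ∀ x y : List Bool,
      C U (x ++ y) (pair2 (bin x.length) (bin y.length)) ≤
        C U y (bin y.length) + C U x (pair2 y (bin x.length)) + 2 * C2 U y + d := by
  obtain ⟨c, hc⟩ := hU.2.2 (MM U) (partrec_MM hU.1)
  refine ⟨c + 2, fun x y => ?_⟩
  obtain ⟨q, hqlen, hq⟩ := exists_shortest hU (bin (CL U y)) (bin y.length)
  obtain ⟨p1, h1len, h1⟩ := exists_shortest hU y (bin y.length)
  obtain ⟨p2, h2len, h2⟩ := exists_shortest hU x (pair2 y (bin x.length))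
  set cond := pair2 (bin x.length) (bin y.length) with hconddef
  set P := sd q ++ (p1 ++ p2) with hPdef
  have hpre : preM (Nat.pair (encode P) (encode cond)) =
      some ((q, p1 ++ p2), bin x.length, bin y.length) := by
    simp [preM, Nat.unpair_pair, Encodable.encodek, hconddef, hPdef, ofB_pair2, parse_sd]
  have hs1 : ((p1 ++ p2, bin x.length, bin y.length, CL U y) : S1) ∈
      st1 U ((q, p1 ++ p2), bin x.length, bin y.length) := by
    refine Part.mem_bind_iff.2 ⟨encode (bin (CL U y)), hq, ?_⟩
    simp [Encodable.encodek, bin, ofB_bits]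
  have h1len' : p1.length = CL U y := h1len
  have hs2 : ((p2, bin x.length, y) : S2) ∈
      st2 U (p1 ++ p2, bin x.length, bin y.length, CL U y) := by
    refine Part.mem_bind_iff.2 ⟨encode y, ?_, ?_⟩
    · rw [← h1len', mytake_left]
      exact h1
    · simp only [Encodable.encodek, Option.map_some]
      rw [← h1len', mydrop_left]
      simp
  have hs3 : (encode (x ++ y) : ℕ) ∈ st3 U (p2, bin x.length, y) := by
    refine Part.mem_bind_iff.2 ⟨encode x, h2, ?_⟩
    simp [Encodable.encodek]
  have hprod : encode (x ++ y) ∈ MM U (Nat.pair (encode P) (encode cond)) := by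
    refine Part.mem_bind_iff.2 ⟨(p2, bin x.length, y), ?_, hs3⟩
    refine Part.mem_bind_iff.2 ⟨(p1 ++ p2, bin x.length, bin y.length, CL U y), ?_, hs2⟩
    refine Part.mem_bind_iff.2 ⟨((q, p1 ++ p2), bin x.length, bin y.length), ?_, hs1⟩
    simp [hpre]
  have hP : Produces (MM U) (x ++ y) cond := ⟨P, hprod⟩
  have hlen : P.length =
      2 * C2 U y + 2 + C U y (bin y.length) + C U x (pair2 y (bin x.length)) := by
    simp [hPdef, sd_length, hqlen, h1len, h2len]
    have : q.length = C2 U y := hqlen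
    omega
  calc C U (x ++ y) cond ≤ C (MM U) (x ++ y) cond + c := hc _ _ hP
    _ ≤ P.length + c := Nat.add_le_add_right (C_le hprod) c
    _ ≤ _ := by rw [hlen]; omega


end SymInfo
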